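/- There do not exist a real constant c > 0 and a natural number p₀ such that for every prime p > p₀, every set A ⊆ 𝔽_p with |A| > (1/2 − c)·p satisfies 𝔽_p^× ⊆ A*. Equivalently: for every c > 0 and every p₀, there exist a prime p > p₀ and a set A ⊆ 𝔽_p with |A| > (1/2 − c)·p and 1 ∉ A*. -/

import Mathlib

open scoped Pointwise

/-- The auxiliary polynomial `g(a) = a(a-1)(a+1)(a-2)(2a-1)`. -/
def skg {p : ℕ} (a : ZMod p) : ZMod p := a * (a - 1) * (a + 1) * (a - 2) * (2 * a - 1)

lemma skg_one_sub {p : ℕ} (a : ZMod p) : skg (1 - a) = - skg a := by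
  unfold skg; ring

lemma skg_inv {p : ℕ} [Fact p.Prime] (a : ZMod p) (ha : a ≠ 0) :
    skg a⁻¹ * (a ^ 3) ^ 2 = - skg a := by
  have h : a⁻¹ * a = 1 := inv_mul_cancel₀ ha
  calc skg a⁻¹ * (a ^ 3) ^ 2
      = (a⁻¹ * a) * ((a⁻¹ * a) - a) * ((a⁻¹ * a) + a) * ((a⁻¹ * a) - 2 * a)
        * (2 * (a⁻¹ * a) - a) * a := by unfold skg; ring
    _ = - skg a := by rw [h]; unfold skg; ring

/-- In a field where `-1` is not a square, `x` and `-x` are not both squares. -/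
lemma not_isSquare_self_and_neg {F : Type*} [Field F] (hneg : ¬ IsSquare (-1 : F))
    {x : F} (hx : x ≠ 0) (h1 : IsSquare x) (h2 : IsSquare (-x)) : False := by
  obtain ⟨a, ha⟩ := h1
  obtain ⟨b, hb⟩ := h2
  have ha0 : a ≠ 0 := by rintro rfl; simp at ha; exact hx ha
  refine hneg ⟨b / a, ?_⟩
  have h : (b / a) * (b / a) = (b * b) / (a * a) := by ring
  rw [h, ← ha, ← hb, neg_div, div_self hx]

theorem sarkozy_conjecture_false :
    ¬ ∃ c : ℝ, 0 < c ∧ ∃ p₀ : ℕ, ∀ p : ℕ, p.Prime → p > p₀ →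
      ∀ A : Finset (ZMod p), (A.card : ℝ) > (1 / 2 - c) * p →
        ∀ x : ZMod p, x ≠ 0 → x ∈ (A + A) ∪ (A * A) := by
  rintro ⟨c, hc, p₀, H⟩
  -- choose a prime `p ≡ 3 [MOD 4]` with `p > max (max p₀ 5) ⌈5/(2c)⌉`
  obtain ⟨p, hpgt, hp, hp4⟩ :=
    Nat.forall_exists_prime_gt_and_eq_mod (q := 4) (a := 3) (by decide)
      (max (max p₀ 5) ⌈(5 : ℝ) / (2 * c)⌉₊)
  haveI : Fact p.Prime := ⟨hp⟩
  have hp5 : 5 < p := lt_of_le_of_lt ((le_max_right p₀ 5).trans (le_max_left _ _)) hpgt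
  have hpc : (5 : ℝ) / (2 * c) < p := by
    have h1 : (⌈(5 : ℝ) / (2 * c)⌉₊ : ℝ) < p := by
      exact_mod_cast (le_max_right _ _).trans_lt hpgt
    exact lt_of_le_of_lt (Nat.le_ceil _) h1
  have hpmod : p % 4 = 3 := by
    have h : ((p : ZMod 4)).val = (3 : ZMod 4).val := by rw [hp4]
    simpa [ZMod.val_natCast] using h.trans (show (3 : ZMod 4).val = 3 by decide)
  -- `-1` is not a square mod `p`
  have hneg : ¬ IsSquare (-1 : ZMod p) := by
    rw [ZMod.exists_sq_eq_neg_one_iff]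
    simp [hpmod]
  have h2ne : (2 : ZMod p) ≠ 0 := by
    intro h
    have h2 : ((2 : ℕ) : ZMod p) = 0 := by exact_mod_cast h
    rw [ZMod.natCast_eq_zero_iff] at h2
    have := Nat.le_of_dvd (by norm_num) h2
    omega
  classical
  -- the set `A`
  set A : Finset (ZMod p) :=
    Finset.univ.filter (fun a => skg a ≠ 0 ∧ IsSquare (skg a)) with hA
  set B : Finset (ZMod p) :=
    Finset.univ.filter (fun a => skg a ≠ 0 ∧ ¬ IsSquare (skg a)) with hB
  -- the involution `a ↦ 1 - a` swaps `A` and `B`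
  have hcard : A.card = B.card := by
    refine Finset.card_bij' (fun a _ => 1 - a) (fun a _ => 1 - a) ?_ ?_ ?_ ?_
    · intro a haA
      rw [hA, Finset.mem_filter] at haA
      rw [hB, Finset.mem_filter]
      refine ⟨Finset.mem_univ _, ?_, ?_⟩
      · rw [skg_one_sub]; exact neg_ne_zero.mpr haA.2.1
      · rw [skg_one_sub]
        intro hsq
        exact not_isSquare_self_and_neg hneg haA.2.1 haA.2.2 hsq
    · intro a haB
      rw [hB, Finset.mem_filter] at haB
      rw [hA, Finset.mem_filter]
      refine ⟨Finset.mem_univ _, ?_, ?_⟩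
      · rw [skg_one_sub]; exact neg_ne_zero.mpr haB.2.1
      · rw [skg_one_sub]
        by_contra hns
        have h1 : quadraticChar (ZMod p) (skg a) = -1 :=
          quadraticChar_neg_one_iff_not_isSquare.mpr haB.2.2
        have h2 : quadraticChar (ZMod p) (- skg a) = -1 :=
          quadraticChar_neg_one_iff_not_isSquare.mpr hns
        have h3 : quadraticChar (ZMod p) (-1 : ZMod p) = -1 :=
          quadraticChar_neg_one_iff_not_isSquare.mpr hneg
        have h4 : quadraticChar (ZMod p) (- skg a) =
            quadraticChar (ZMod p) (-1 : ZMod p) * quadraticChar (ZMod p) (skg a) := by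
          rw [← map_mul]; ring_nf
        rw [h2, h3, h1] at h4
        norm_num at h4
    · intro a _; ring
    · intro a _; ring
  -- zeros of `skg` are among 5 elements
  have hzero : Finset.univ.filter (fun a : ZMod p => skg a = 0) ⊆
      {0, 1, -1, 2, (2 : ZMod p)⁻¹} := by
    intro a ha
    rw [Finset.mem_filter] at ha
    have hz := ha.2
    unfold skg at hz
    rcases mul_eq_zero.mp hz with h | h
    · rcases mul_eq_zero.mp h with h | h
      · rcases mul_eq_zero.mp h with h | h
        · rcases mul_eq_zero.mp h with h | h
          · simp [h]
          · have : a = 1 := by linear_combination h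
            simp [this]
        · have : a = -1 := by linear_combination h
          simp [this]
      · have : a = 2 := by linear_combination h
        simp [this]
    · have : a = (2 : ZMod p)⁻¹ := by
        field_simp
        linear_combination h
      simp [this]
  have hcardZ : (Finset.univ.filter (fun a : ZMod p => skg a = 0)).card ≤ 5 := by
    calc (Finset.univ.filter (fun a : ZMod p => skg a = 0)).card
        ≤ ({0, 1, -1, 2, (2 : ZMod p)⁻¹} : Finset (ZMod p)).card :=
          Finset.card_le_card hzero
      _ ≤ 5 := by
          apply le_trans (Finset.card_insert_le _ _)
          apply Nat.succ_le_succ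
          apply le_trans (Finset.card_insert_le _ _)
          apply Nat.succ_le_succ
          apply le_trans (Finset.card_insert_le _ _)
          apply Nat.succ_le_succ
          apply le_trans (Finset.card_insert_le _ _)
          apply Nat.succ_le_succ
          simp
  -- counting: `A.card + B.card + #zeros = p`
  have hunion : A.card + B.card
      + (Finset.univ.filter (fun a : ZMod p => skg a = 0)).card = p := by
    have hdisj : Disjoint A B := by
      rw [hA, hB, Finset.disjoint_filter]
      rintro a _ ⟨h1, h2⟩ ⟨h3, h4⟩
      exact h4 h2
    have h1 : A ∪ B = Finset.univ.filter (fun a : ZMod p => skg a ≠ 0) := by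
      rw [hA, hB, ← Finset.filter_or]
      apply Finset.filter_congr
      intro a _
      by_cases h : skg a ≠ 0 <;> by_cases h2 : IsSquare (skg a) <;> simp [h, h2]
    have h2 : (A ∪ B).card = A.card + B.card := Finset.card_union_of_disjoint hdisj
    have h3 : (Finset.univ.filter (fun a : ZMod p => skg a ≠ 0)).card
        + (Finset.univ.filter (fun a : ZMod p => skg a = 0)).card = Fintype.card (ZMod p) := by
      simpa using Finset.card_filter_add_card_filter_not
        (s := (Finset.univ : Finset (ZMod p))) (p := fun a : ZMod p => skg a ≠ 0)
    rw [← h2, h1, h3]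
    exact ZMod.card p
  have hcA : p ≤ 2 * A.card + 5 := by omega
  -- the size condition
  have hAcard : (A.card : ℝ) > (1 / 2 - c) * p := by
    have h2A : (p : ℝ) ≤ 2 * A.card + 5 := by exact_mod_cast hcA
    have hcp : (5 : ℝ) / 2 < c * p := by
      rw [div_lt_iff₀ (by linarith)] at hpc
      linarith
    linarith
  -- apply the hypothesis with `x = 1`
  have h1 := H p hp (lt_of_le_of_lt ((le_max_left p₀ 5).trans (le_max_left _ _)) hpgt)
    A hAcard 1 one_ne_zero
  have memA : ∀ a : ZMod p, a ∈ A → skg a ≠ 0 ∧ IsSquare (skg a) := by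
    intro a ha
    rw [hA, Finset.mem_filter] at ha
    exact ha.2
  rcases Finset.mem_union.mp h1 with h | h
  · rw [Finset.mem_add] at h
    obtain ⟨a, ha, b, hb, hab⟩ := h
    obtain ⟨ha1, ha2⟩ := memA a ha
    obtain ⟨hb1, hb2⟩ := memA b hb
    have hb' : b = 1 - a := by linear_combination hab
    rw [hb', skg_one_sub] at hb2
    exact not_isSquare_self_and_neg hneg ha1 ha2 hb2
  · rw [Finset.mem_mul] at h
    obtain ⟨a, ha, b, hb, hab⟩ := h
    obtain ⟨ha1, ha2⟩ := memA a ha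
    obtain ⟨hb1, hb2⟩ := memA b hb
    have ha0 : a ≠ 0 := by
      rintro rfl
      apply ha1
      unfold skg; ring
    have hb' : b = a⁻¹ := eq_inv_of_mul_eq_one_left (by rw [mul_comm]; exact hab)
    have hkey : - skg a = skg b * (a ^ 3) ^ 2 := by
      rw [hb', skg_inv a ha0]
    obtain ⟨s, hs⟩ := hb2
    have : IsSquare (- skg a) := ⟨s * a ^ 3, by rw [hkey, hs]; ring⟩
    exact not_isSquare_self_and_neg hneg ha1 ha2 this
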